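/- For every integer r ≥ 3 and every natural number N, there exists a connected bipartite r-regular simple graph G on more than N vertices such that: (i) every eigenvalue λ of the adjacency matrix of G over ℝ satisfies λ ∈ {−1, 1} or r − 2 ≤ λ ≤ r or −r ≤ λ ≤ −(r − 2); (ii) both 1 and −1 are eigenvalues of G; and (iii) the median eigenvalues of G are 1 and −1. -/

import Mathlib

open Polynomial
open Matrix

namespace MedianAux

variable (m q : ℕ)

abbrev Vx := Bool × ZMod m × ZMod q

def Adj (v w : Vx m q) : Prop :=
  (v.1 = false ∧ w.1 = true ∧ (w.2.1 = v.2.1 ∨ (w.2.1 = v.2.1 + 1 ∧ w.2.2 = v.2.2))) ∨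
  (v.1 = true ∧ w.1 = false ∧ (v.2.1 = w.2.1 ∨ (v.2.1 = w.2.1 + 1 ∧ v.2.2 = w.2.2)))

instance : DecidableRel (Adj m q) := fun v w => by unfold Adj; infer_instance

def G : SimpleGraph (Vx m q) where
  Adj := Adj m q
  symm := by
    constructor
    rintro v w (⟨h1, h2, h3⟩ | ⟨h1, h2, h3⟩)
    · exact Or.inr ⟨h2, h1, h3⟩
    · exact Or.inl ⟨h2, h1, h3⟩
  loopless := by constructor; rintro v (⟨h1, h2, _⟩ | ⟨h1, h2, _⟩) <;> rw [h1] at h2 <;> exact Bool.noConfusion h2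

instance : DecidableRel (G m q).Adj := fun v w => by unfold G; infer_instance

variable {m q}

lemma adj_false_iff (i : ZMod m) (j : ZMod q) (w : Vx m q) :
    (G m q).Adj (false, i, j) w ↔
      (w.1 = true ∧ (w.2.1 = i ∨ (w.2.1 = i + 1 ∧ w.2.2 = j))) := by
  show Adj m q _ _ ↔ _
  unfold Adj
  simp

lemma adj_true_iff (i : ZMod m) (j : ZMod q) (w : Vx m q) :
    (G m q).Adj (true, i, j) w ↔
      (w.1 = false ∧ (w.2.1 = i ∨ (w.2.1 = i - 1 ∧ w.2.2 = j))) := by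
  show Adj m q _ _ ↔ _
  unfold Adj
  constructor
  · rintro (⟨h, _⟩ | ⟨_, h2, (h3 | ⟨h3, h4⟩)⟩)
    · exact Bool.noConfusion h
    · exact ⟨h2, Or.inl h3.symm⟩
    · exact ⟨h2, Or.inr ⟨eq_sub_of_add_eq h3.symm, h4.symm⟩⟩
  · rintro ⟨h1, (h2 | ⟨h2, h3⟩)⟩
    · exact Or.inr ⟨rfl, h1, Or.inl h2.symm⟩
    · exact Or.inr ⟨rfl, h1, Or.inr ⟨by rw [h2]; ring, h3.symm⟩⟩


lemma ite_or_disjoint {α : Type*} [AddCommMonoid α] {P Q : Prop} [Decidable P] [Decidable Q]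
    (h : ¬(P ∧ Q)) (a : α) :
    (if P ∨ Q then a else 0) = (if P then a else 0) + (if Q then a else 0) := by
  by_cases hp : P <;> by_cases hq : Q <;> simp [hp, hq]
  exact absurd ⟨hp, hq⟩ h

lemma add_one_ne (hm : 2 ≤ m) (i : ZMod m) : i + 1 ≠ i := by
  haveI : Fact (1 < m) := ⟨hm⟩
  intro h
  have h1 : (1 : ZMod m) = 0 := by
    have := congrArg (fun x => x - i) h
    simpa [add_comm, add_sub_cancel_right] using this
  exact one_ne_zero h1

lemma sub_one_ne (hm : 2 ≤ m) (i : ZMod m) : i - 1 ≠ i := by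
  intro h
  exact add_one_ne hm i (sub_eq_iff_eq_add.mp h).symm

section Sums
variable {α : Type*} [AddCommMonoid α] [NeZero m] [NeZero q]

lemma sum_split (c : ZMod m) (g : ZMod m × ZMod q → α)
    (P : ZMod m → Prop) [DecidablePred P] (hP : ∀ x, ¬ (P x ∧ x = c)) (jj : ZMod q) :
    ∑ x : ZMod m × ZMod q, (if P x.1 ∨ (x.1 = c ∧ x.2 = jj) then g x else 0)
      = (∑ x : ZMod m × ZMod q, if P x.1 then g x else 0) + g (c, jj) := by
  have h1 : ∀ x : ZMod m × ZMod q, (if P x.1 ∨ (x.1 = c ∧ x.2 = jj) then g x else 0)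
      = (if P x.1 then g x else 0) + (if x = (c, jj) then g x else 0) := by
    intro x
    rw [ite_or_disjoint (fun h => hP x.1 ⟨h.1, h.2.1⟩)]
    congr 1
    exact if_congr (Iff.symm Prod.ext_iff) rfl rfl
  rw [Finset.sum_congr rfl (fun x _ => h1 x), Finset.sum_add_distrib,
    Finset.sum_ite_eq' Finset.univ (c, jj) g]
  simp


lemma sum_fiber (g : ZMod m × ZMod q → α) (i : ZMod m) :
    ∑ x : ZMod m × ZMod q, (if x.1 = i then g x else 0) = ∑ j' : ZMod q, g (i, j') := by
  rw [Fintype.sum_prod_type]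
  have h : ∀ i' : ZMod m, (∑ j' : ZMod q, if i' = i then g (i', j') else 0)
      = if i' = i then ∑ j' : ZMod q, g (i', j') else 0 := fun i' => by split <;> simp
  rw [Finset.sum_congr rfl fun i' _ => h i', Finset.sum_ite_eq' Finset.univ i
    (fun i' => ∑ j' : ZMod q, g (i', j'))]
  simp

lemma sum_nbhd_false (hm : 2 ≤ m) (f : Vx m q → α) (i : ZMod m) (j : ZMod q) :
    ∑ w ∈ (G m q).neighborFinset (false, i, j), f w
      = (∑ j' : ZMod q, f (true, i, j')) + f (true, i + 1, j) := by
  rw [SimpleGraph.neighborFinset_eq_filter, Finset.sum_filter]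
  rw [Fintype.sum_prod_type, Fintype.sum_bool]
  simp only [adj_false_iff]
  simp only [show (true = true ∧ ·) = id by funext p; simp, show ∀ (P : Prop), (false = true ∧ P) = False by intro P; simp]
  simp only [id, if_false, true_and]
  rw [Finset.sum_const_zero, add_zero]
  rw [sum_split (i + 1) (fun x => f (true, x)) (· = i)
    (fun x hx => add_one_ne hm i (show i + 1 = i by rw [← hx.2, hx.1])) j]
  rw [sum_fiber (fun x => f (true, x)) i]

lemma sum_nbhd_true (hm : 2 ≤ m) (f : Vx m q → α) (i : ZMod m) (j : ZMod q) :
    ∑ w ∈ (G m q).neighborFinset (true, i, j), f w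
      = (∑ j' : ZMod q, f (false, i, j')) + f (false, i - 1, j) := by
  rw [SimpleGraph.neighborFinset_eq_filter, Finset.sum_filter]
  rw [Fintype.sum_prod_type, Fintype.sum_bool]
  simp only [adj_true_iff]
  simp only [show (false = false ∧ ·) = id by funext p; simp, show ∀ (P : Prop), (true = false ∧ P) = False by intro P; simp]
  simp only [id, if_false, true_and]
  rw [Finset.sum_const_zero, zero_add]
  rw [sum_split (i - 1) (fun x => f (false, x)) (· = i)
    (fun x hx => sub_one_ne hm i (show i - 1 = i by rw [← hx.2, hx.1])) j]
  rw [sum_fiber (fun x => f (false, x)) i]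

end Sums

section Graph
variable [NeZero m] [NeZero q]

lemma regular (hm : 2 ≤ m) : (G m q).IsRegularOfDegree (q + 1) := by
  rintro ⟨a, i, j⟩
  rw [SimpleGraph.degree, Finset.card_eq_sum_ones]
  cases a
  · rw [sum_nbhd_false hm (fun _ => (1 : ℕ)) i j]
    simp [ZMod.card]
  · rw [sum_nbhd_true hm (fun _ => (1 : ℕ)) i j]
    simp [ZMod.card]

lemma mulVec_false (hm : 2 ≤ m) (v : Vx m q → ℝ) (i : ZMod m) (j : ZMod q) :
    ((G m q).adjMatrix ℝ *ᵥ v) (false, i, j)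
      = (∑ j' : ZMod q, v (true, i, j')) + v (true, i + 1, j) := by
  rw [SimpleGraph.adjMatrix_mulVec_apply, sum_nbhd_false hm]

lemma mulVec_true (hm : 2 ≤ m) (v : Vx m q → ℝ) (i : ZMod m) (j : ZMod q) :
    ((G m q).adjMatrix ℝ *ᵥ v) (true, i, j)
      = (∑ j' : ZMod q, v (false, i, j')) + v (false, i - 1, j) := by
  rw [SimpleGraph.adjMatrix_mulVec_apply, sum_nbhd_true hm]

lemma adj_AB (i : ZMod m) (j j' : ZMod q) : (G m q).Adj (false, i, j) (true, i, j') :=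
  Or.inl ⟨rfl, rfl, Or.inl rfl⟩

lemma adj_match (i : ZMod m) (j : ZMod q) : (G m q).Adj (false, i, j) (true, i + 1, j) :=
  Or.inl ⟨rfl, rfl, Or.inr ⟨rfl, rfl⟩⟩

lemma reach_base (n : ℕ) : (G m q).Reachable (false, 0, 0) (false, (n : ZMod m), 0) := by
  induction n with
  | zero => simpa using SimpleGraph.Reachable.refl (G := G m q) ((false, 0, 0) : Vx m q)
  | succ k ih =>
      refine ih.trans ?_
      have h1 : (G m q).Adj (false, (k : ZMod m), 0) (true, (k : ZMod m) + 1, 0) := adj_match _ _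
      have h2 : (G m q).Adj (false, ((k + 1 : ℕ) : ZMod m), 0) (true, (k : ZMod m) + 1, 0) := by
        have : ((k + 1 : ℕ) : ZMod m) = (k : ZMod m) + 1 := by push_cast; ring
        rw [this]
        exact adj_AB _ _ _
      exact h1.reachable.trans h2.reachable.symm

lemma reach_all (v : Vx m q) : (G m q).Reachable (false, 0, 0) v := by
  obtain ⟨a, i, j⟩ := v
  have hbase : (G m q).Reachable (false, 0, 0) (false, i, 0) := by
    have h := reach_base (m := m) (q := q) i.val
    rwa [(ZMod.natCast_rightInverse i : ((i.val : ℕ) : ZMod m) = i)] at h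
  have hfib : ∀ j' : ZMod q, (G m q).Reachable (false, i, 0) (false, i, j') := fun j' =>
    (adj_AB i 0 0).reachable.trans (adj_AB i j' 0).reachable.symm
  cases a
  · exact hbase.trans (hfib j)
  · exact ((hbase.trans (hfib j)).trans (adj_AB i j j).reachable)

lemma connected : (G m q).Connected := by
  rw [SimpleGraph.connected_iff]
  refine ⟨fun u v => ?_, ⟨(false, 0, 0)⟩⟩
  exact (reach_all u).symm.trans (reach_all v)

lemma colorable : (G m q).Colorable 2 := by
  refine ⟨SimpleGraph.Coloring.mk (fun v => if v.1 = true then (0 : Fin 2) else 1) ?_⟩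
  rintro v w (⟨h1, h2, _⟩ | ⟨h1, h2, _⟩) <;> simp [h1, h2]

end Graph

section Eig
variable [NeZero m] [NeZero q]

lemma sum_const_fiber (v : Vx m q → ℝ) (a : Bool) (i : ZMod m)
    (hc : ∀ j j' : ZMod q, v (a, i, j) = v (a, i, j')) (j0 : ZMod q) :
    ∑ j' : ZMod q, v (a, i, j') = (q : ℝ) * v (a, i, j0) := by
  rw [Finset.sum_congr rfl (fun j' _ => hc j' j0), Finset.sum_const, Finset.card_univ,
    ZMod.card, nsmul_eq_mul]

lemma second_order (hm : 2 ≤ m) (μ : ℝ) (v : Vx m q → ℝ)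
    (hv : (G m q).adjMatrix ℝ *ᵥ v = μ • v) (a : Bool) (i : ZMod m) (j : ZMod q) :
    (μ ^ 2 - 1) * v (a, i, j)
        = (q : ℝ) * (∑ j' : ZMod q, v (a, i, j')) + (∑ j' : ZMod q, v (a, i - 1, j'))
          + (∑ j' : ZMod q, v (a, i + 1, j')) := by
  have F1 : ∀ (i : ZMod m) (j : ZMod q),
      (∑ j' : ZMod q, v (true, i, j')) + v (true, i + 1, j) = μ * v (false, i, j) := by
    intro i j
    have h := congrFun hv (false, i, j)
    rw [mulVec_false hm v i j] at h
    simpa using h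
  have F2 : ∀ (i : ZMod m) (j : ZMod q),
      (∑ j' : ZMod q, v (false, i, j')) + v (false, i - 1, j) = μ * v (true, i, j) := by
    intro i j
    have h := congrFun hv (true, i, j)
    rw [mulVec_true hm v i j] at h
    simpa using h
  have hcard : ((Finset.univ : Finset (ZMod q)).card : ℝ) = (q : ℝ) := by
    rw [Finset.card_univ, ZMod.card]
  cases a
  · have hSB : ∀ i : ZMod m, (q : ℝ) * (∑ j' : ZMod q, v (false, i, j'))
        + (∑ j' : ZMod q, v (false, i - 1, j')) = μ * (∑ j' : ZMod q, v (true, i, j')) := by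
      intro i
      have h := Finset.sum_congr rfl (fun j (_ : j ∈ (Finset.univ : Finset (ZMod q))) => F2 i j)
      rw [Finset.sum_add_distrib, Finset.sum_const, nsmul_eq_mul, hcard, ← Finset.mul_sum] at h
      exact h
    have e1 : μ * v (false, i, j) = (∑ j' : ZMod q, v (true, i, j')) + v (true, i + 1, j) :=
      (F1 i j).symm
    have e2 : μ * v (true, i + 1, j) = (∑ j' : ZMod q, v (false, i + 1, j')) + v (false, i, j) := by
      have h := F2 (i + 1) j
      rw [show i + 1 - 1 = i by ring] at h
      exact h.symm
    calc (μ ^ 2 - 1) * v (false, i, j)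
        = μ * (μ * v (false, i, j)) - v (false, i, j) := by ring
      _ = μ * (∑ j' : ZMod q, v (true, i, j')) + μ * v (true, i + 1, j)
            - v (false, i, j) := by rw [e1]; ring
      _ = ((q : ℝ) * (∑ j' : ZMod q, v (false, i, j')) + (∑ j' : ZMod q, v (false, i - 1, j')))
            + ((∑ j' : ZMod q, v (false, i + 1, j')) + v (false, i, j)) - v (false, i, j) := by
          rw [← hSB i, e2]
      _ = (q : ℝ) * (∑ j' : ZMod q, v (false, i, j')) + (∑ j' : ZMod q, v (false, i - 1, j'))
            + (∑ j' : ZMod q, v (false, i + 1, j')) := by ring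
  · have hSA : ∀ i : ZMod m, (q : ℝ) * (∑ j' : ZMod q, v (true, i, j'))
        + (∑ j' : ZMod q, v (true, i + 1, j')) = μ * (∑ j' : ZMod q, v (false, i, j')) := by
      intro i
      have h := Finset.sum_congr rfl (fun j (_ : j ∈ (Finset.univ : Finset (ZMod q))) => F1 i j)
      rw [Finset.sum_add_distrib, Finset.sum_const, nsmul_eq_mul, hcard, ← Finset.mul_sum] at h
      exact h
    have e1 : μ * v (true, i, j) = (∑ j' : ZMod q, v (false, i, j')) + v (false, i - 1, j) :=
      (F2 i j).symm
    have e2 : μ * v (false, i - 1, j) = (∑ j' : ZMod q, v (true, i - 1, j')) + v (true, i, j) := by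
      have h := F1 (i - 1) j
      rw [show i - 1 + 1 = i by ring] at h
      exact h.symm
    calc (μ ^ 2 - 1) * v (true, i, j)
        = μ * (μ * v (true, i, j)) - v (true, i, j) := by ring
      _ = μ * (∑ j' : ZMod q, v (false, i, j')) + μ * v (false, i - 1, j)
            - v (true, i, j) := by rw [e1]; ring
      _ = ((q : ℝ) * (∑ j' : ZMod q, v (true, i, j')) + (∑ j' : ZMod q, v (true, i + 1, j')))
            + ((∑ j' : ZMod q, v (true, i - 1, j')) + v (true, i, j)) - v (true, i, j) := by
          rw [← hSA i, e2]
      _ = (q : ℝ) * (∑ j' : ZMod q, v (true, i, j')) + (∑ j' : ZMod q, v (true, i - 1, j'))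
            + (∑ j' : ZMod q, v (true, i + 1, j')) := by ring

lemma reindex_shift (f : Bool × ZMod m → ℝ) :
    ∑ p : Bool × ZMod m, f (p.1, p.2 + 1) = ∑ p : Bool × ZMod m, f p :=
  Fintype.sum_equiv (Equiv.prodCongr (Equiv.refl Bool) (Equiv.addRight (1 : ZMod m)))
    _ _ (fun p => rfl)

lemma eig_mem (hm : 2 ≤ m) (hq : 2 ≤ q) (μ : ℝ) (v : Vx m q → ℝ) (hv0 : v ≠ 0)
    (hv : (G m q).adjMatrix ℝ *ᵥ v = μ • v) :
    μ = -1 ∨ μ = 1 ∨ ((q : ℝ) - 1 ≤ μ ∧ μ ≤ (q : ℝ) + 1)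
      ∨ (-((q : ℝ) + 1) ≤ μ ∧ μ ≤ -((q : ℝ) - 1)) := by
  have hqR : (2 : ℝ) ≤ (q : ℝ) := by exact_mod_cast hq
  by_cases hν : μ ^ 2 - 1 = 0
  · have : (μ - 1) * (μ + 1) = 0 := by ring_nf; linarith [hν]
    rcases mul_eq_zero.mp this with h | h
    · exact Or.inr (Or.inl (by linarith))
    · exact Or.inl (by linarith)
  · -- constancy in the last coordinate
    have hconst : ∀ (a : Bool) (i : ZMod m) (j j' : ZMod q), v (a, i, j) = v (a, i, j') := by
      intro a i j j'
      have h1 := second_order hm μ v hv a i j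
      have h2 := second_order hm μ v hv a i j'
      exact mul_left_cancel₀ hν (h1.trans h2.symm)
    set u : Bool × ZMod m → ℝ := fun p => v (p.1, p.2, 0) with hu
    have hvu : ∀ (a : Bool) (i : ZMod m) (j : ZMod q), v (a, i, j) = u (a, i) :=
      fun a i j => hconst a i j 0
    have hsum : ∀ (a : Bool) (i : ZMod m), (∑ j' : ZMod q, v (a, i, j')) = (q : ℝ) * u (a, i) := by
      intro a i
      rw [Finset.sum_congr rfl (fun j' _ => hvu a i j'), Finset.sum_const, Finset.card_univ,
        ZMod.card, nsmul_eq_mul]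
    have hrec : ∀ p : Bool × ZMod m, (μ ^ 2 - 1) * u p
        = (q : ℝ) * ((q : ℝ) * u p + u (p.1, p.2 - 1) + u (p.1, p.2 + 1)) := by
      rintro ⟨a, i⟩
      have h := second_order hm μ v hv a i 0
      rw [hsum a i, hsum a (i - 1), hsum a (i + 1)] at h
      calc (μ ^ 2 - 1) * u (a, i) = (μ ^ 2 - 1) * v (a, i, 0) := by rw [← hvu a i 0]
        _ = (q : ℝ) * ((q : ℝ) * u (a, i)) + (q : ℝ) * u (a, i - 1)
              + (q : ℝ) * u (a, i + 1) := h
        _ = (q : ℝ) * ((q : ℝ) * u (a, i) + u (a, i - 1) + u (a, i + 1)) := by ring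
    set T := ∑ p : Bool × ZMod m, u p ^ 2 with hT
    set E := ∑ p : Bool × ZMod m, u p * u (p.1, p.2 + 1) with hE
    have hT1 : ∑ p : Bool × ZMod m, u (p.1, p.2 + 1) ^ 2 = T := reindex_shift (fun p => u p ^ 2)
    have hEalt : ∑ p : Bool × ZMod m, u (p.1, p.2 - 1) * u p = E := by
      have h := reindex_shift (fun p => u (p.1, p.2 - 1) * u p)
      rw [← h]
      apply Finset.sum_congr rfl
      intro p _
      rw [show p.2 + 1 - 1 = p.2 by ring]
    have hTpos : 0 < T := by
      have hex : ∃ p : Bool × ZMod m, u p ≠ 0 := by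
        by_contra hc
        push_neg at hc
        exact hv0 (funext fun w => by
          obtain ⟨a, i, j⟩ := w
          simp [hvu a i j, hc (a, i)])
      obtain ⟨p0, hp0⟩ := hex
      have h1 : (0 : ℝ) < u p0 ^ 2 := by positivity
      have h2 : u p0 ^ 2 ≤ T :=
        Finset.single_le_sum (fun p _ => sq_nonneg (u p)) (Finset.mem_univ p0)
      linarith
    have hmain : (μ ^ 2 - 1) * T = (q : ℝ) * ((q : ℝ) * T + E + E) := by
      calc (μ ^ 2 - 1) * T = ∑ p : Bool × ZMod m, ((μ ^ 2 - 1) * u p) * u p := by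
            rw [hT, Finset.mul_sum]
            exact Finset.sum_congr rfl (fun p _ => by ring)
        _ = ∑ p : Bool × ZMod m, ((q : ℝ) * ((q : ℝ) * u p + u (p.1, p.2 - 1)
              + u (p.1, p.2 + 1))) * u p :=
            Finset.sum_congr rfl (fun p _ => by rw [hrec p])
        _ = (q : ℝ) * ((q : ℝ) * (∑ p : Bool × ZMod m, u p ^ 2)
              + (∑ p : Bool × ZMod m, u (p.1, p.2 - 1) * u p)
              + (∑ p : Bool × ZMod m, u p * u (p.1, p.2 + 1))) := by
            have e : ∀ p : Bool × ZMod m,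
                (q : ℝ) * ((q : ℝ) * u p + u (p.1, p.2 - 1) + u (p.1, p.2 + 1)) * u p
                  = (q : ℝ) * (u p ^ 2) * (q : ℝ) + (q : ℝ) * (u (p.1, p.2 - 1) * u p)
                    + (q : ℝ) * (u p * u (p.1, p.2 + 1)) := fun p => by ring
            rw [Finset.sum_congr rfl (fun p _ => e p), Finset.sum_add_distrib,
              Finset.sum_add_distrib, ← Finset.mul_sum, ← Finset.mul_sum, ← Finset.sum_mul,
              ← Finset.mul_sum]
            ring
        _ = (q : ℝ) * ((q : ℝ) * T + E + E) := by rw [← hT, hEalt, ← hE]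
    have hEub : E ≤ T := by
      have h0 : (0 : ℝ) ≤ ∑ p : Bool × ZMod m, (u p - u (p.1, p.2 + 1)) ^ 2 :=
        Finset.sum_nonneg (fun p _ => sq_nonneg _)
      have hexp : ∑ p : Bool × ZMod m, (u p - u (p.1, p.2 + 1)) ^ 2 = T + T - (E + E) := by
        have : ∀ p : Bool × ZMod m, (u p - u (p.1, p.2 + 1)) ^ 2
            = u p ^ 2 + u (p.1, p.2 + 1) ^ 2 - (u p * u (p.1, p.2 + 1) + u p * u (p.1, p.2 + 1)) :=
          fun p => by ring
        rw [Finset.sum_congr rfl (fun p _ => this p)]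
        rw [Finset.sum_sub_distrib, Finset.sum_add_distrib, Finset.sum_add_distrib, hT1]
      rw [hexp] at h0
      linarith
    have hElb : -T ≤ E := by
      have h0 : (0 : ℝ) ≤ ∑ p : Bool × ZMod m, (u p + u (p.1, p.2 + 1)) ^ 2 :=
        Finset.sum_nonneg (fun p _ => sq_nonneg _)
      have hexp : ∑ p : Bool × ZMod m, (u p + u (p.1, p.2 + 1)) ^ 2 = T + T + (E + E) := by
        have : ∀ p : Bool × ZMod m, (u p + u (p.1, p.2 + 1)) ^ 2
            = u p ^ 2 + u (p.1, p.2 + 1) ^ 2 + (u p * u (p.1, p.2 + 1) + u p * u (p.1, p.2 + 1)) :=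
          fun p => by ring
        rw [Finset.sum_congr rfl (fun p _ => this p)]
        rw [Finset.sum_add_distrib, Finset.sum_add_distrib, Finset.sum_add_distrib, hT1]
      rw [hexp] at h0
      linarith
    have hup : μ ^ 2 - 1 ≤ (q : ℝ) * ((q : ℝ) + 2) := by
      have h1 : (μ ^ 2 - 1) * T ≤ ((q : ℝ) * ((q : ℝ) + 2)) * T := by
        rw [hmain]
        nlinarith [hqR, hEub, hTpos.le]
      exact le_of_mul_le_mul_right h1 hTpos
    have hlo : (q : ℝ) * ((q : ℝ) - 2) ≤ μ ^ 2 - 1 := by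
      have h1 : ((q : ℝ) * ((q : ℝ) - 2)) * T ≤ (μ ^ 2 - 1) * T := by
        rw [hmain]
        nlinarith [hqR, hElb, hTpos.le]
      exact le_of_mul_le_mul_right h1 hTpos
    rcases le_or_gt 0 μ with h | h
    · refine Or.inr (Or.inr (Or.inl ⟨?_, ?_⟩))
      · nlinarith [hlo, hqR, h]
      · nlinarith [hup, hqR, h]
    · refine Or.inr (Or.inr (Or.inr ⟨?_, ?_⟩))
      · nlinarith [hup, hqR, h]
      · nlinarith [hlo, hqR, h]

end Eig

lemma algebraMap_mulVec {n : Type*} [Fintype n] [DecidableEq n] (μ : ℝ) (v : n → ℝ) :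
    (algebraMap ℝ (Matrix n n ℝ) μ) *ᵥ v = μ • v := by
  funext i
  rw [Matrix.algebraMap_eq_diagonal, Matrix.mulVec_diagonal]
  simp

lemma spectrum_iff_eigen {n : Type*} [Fintype n] [DecidableEq n] (B : Matrix n n ℝ) (μ : ℝ) :
    μ ∈ spectrum ℝ B ↔ ∃ v : n → ℝ, v ≠ 0 ∧ B *ᵥ v = μ • v := by
  rw [spectrum.mem_iff]
  constructor
  · intro h
    have hdet : (algebraMap ℝ (Matrix n n ℝ) μ - B).det = 0 := by
      by_contra hd
      exact h ((Matrix.isUnit_iff_isUnit_det _).mpr (isUnit_iff_ne_zero.mpr hd))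
    obtain ⟨v, hv, hmv⟩ := (Matrix.exists_mulVec_eq_zero_iff).mpr hdet
    refine ⟨v, hv, ?_⟩
    rw [Matrix.sub_mulVec, algebraMap_mulVec, sub_eq_zero] at hmv
    exact hmv.symm
  · rintro ⟨v, hv, hmv⟩ hunit
    have hdet : (algebraMap ℝ (Matrix n n ℝ) μ - B).det = 0 := by
      apply (Matrix.exists_mulVec_eq_zero_iff).mp
      refine ⟨v, hv, ?_⟩
      rw [Matrix.sub_mulVec, algebraMap_mulVec, hmv, sub_self]
    rw [Matrix.isUnit_iff_isUnit_det, isUnit_iff_ne_zero] at hunit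
    exact hunit hdet

section PM
variable [NeZero m] [NeZero q]

def uu : ZMod q → ℝ := fun j => if j = 0 then 1 else if j = 1 then -1 else 0

lemma sum_uu (hq : 2 ≤ q) : ∑ j : ZMod q, uu (q := q) j = 0 := by
  haveI : Fact (1 < q) := ⟨hq⟩
  have h01 : (0 : ZMod q) ≠ 1 := zero_ne_one
  have hsplit : ∀ j : ZMod q, uu (q := q) j
      = (if j = 0 then (1 : ℝ) else 0) + (if j = 1 then (-1 : ℝ) else 0) := by
    intro j
    unfold uu
    by_cases h0 : j = 0
    · subst h0; simp [h01]
    · by_cases h1 : j = 1 <;> simp [h0, h1]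
  rw [Finset.sum_congr rfl (fun j _ => hsplit j), Finset.sum_add_distrib,
    Finset.sum_ite_eq' Finset.univ (0 : ZMod q) (fun _ => (1 : ℝ)),
    Finset.sum_ite_eq' Finset.univ (1 : ZMod q) (fun _ => (-1 : ℝ))]
  simp

def pmvec (lam : ℝ) : Vx m q → ℝ := fun w =>
  cond w.1 (lam * (if w.2.1 = 1 then uu w.2.2 else 0)) (if w.2.1 = 0 then uu w.2.2 else 0)

lemma pm_eigen (hm : 2 ≤ m) (hq : 2 ≤ q) (lam : ℝ) (hlam : lam * lam = 1) :
    (G m q).adjMatrix ℝ *ᵥ pmvec (m := m) (q := q) lam = lam • pmvec (m := m) (q := q) lam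
      ∧ pmvec (m := m) (q := q) lam ≠ 0 := by
  constructor
  · funext w
    obtain ⟨a, i, j⟩ := w
    have hsumT : ∀ i : ZMod m, (∑ j' : ZMod q, pmvec (m := m) (q := q) lam (true, i, j')) = 0 := by
      intro i
      by_cases h1 : i = 1
      · simp only [pmvec, h1, cond_true, if_pos rfl]
        rw [← Finset.mul_sum]
        simp [sum_uu hq]
      · simp [pmvec, h1]
    have hsumF : ∀ i : ZMod m, (∑ j' : ZMod q, pmvec (m := m) (q := q) lam (false, i, j')) = 0 := by
      intro i
      by_cases h0 : i = 0 <;> simp [pmvec, h0, sum_uu hq]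
    cases a
    · rw [mulVec_false hm _ i j, hsumT i, zero_add]
      have hiff : (i + 1 = (1 : ZMod m)) ↔ i = 0 := by
        constructor
        · intro h
          have h2 := congrArg (fun x => x - 1) h
          simpa using h2
        · intro h; rw [h, zero_add]
      show pmvec (m := m) (q := q) lam (true, i + 1, j) = lam • pmvec (m := m) (q := q) lam (false, i, j)
      by_cases h0 : i = 0
      · simp [pmvec, h0, hiff.mpr h0]
      · have hne : ¬(i + 1 = (1 : ZMod m)) := fun h => h0 (hiff.mp h)
        simp [pmvec, h0, hne]
    · rw [mulVec_true hm _ i j, hsumF i, zero_add]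
      have hiff : (i - 1 = (0 : ZMod m)) ↔ i = 1 := sub_eq_zero
      show pmvec (m := m) (q := q) lam (false, i - 1, j) = lam • pmvec (m := m) (q := q) lam (true, i, j)
      by_cases h1 : i = 1
      · simp [pmvec, h1, hiff.mpr h1, ← mul_assoc, hlam]
      · have hne : ¬(i - 1 = (0 : ZMod m)) := fun h => h1 (hiff.mp h)
        simp [pmvec, h1, hne]
  · intro hzero
    have h := congrFun hzero (false, 0, 0)
    haveI : Fact (1 < q) := ⟨hq⟩
    simp [pmvec, uu] at h

end PM

section Charpoly
variable {n : Type*} [Fintype n] [DecidableEq n]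

lemma eval_charpoly' (B : Matrix n n ℝ) (x : ℝ) :
    B.charpoly.eval x = (x • (1 : Matrix n n ℝ) - B).det := by
  have h : B.charpoly.eval x = (Polynomial.evalRingHom x) (B.charmatrix.det) := rfl
  rw [h, RingHom.map_det]
  simp only [RingHom.mapMatrix_apply]
  congr 1
  ext i k
  by_cases hik : i = k
  · subst hik
    rw [Matrix.map_apply, Matrix.charmatrix_apply_eq]
    simp [Matrix.one_apply_eq]
  · rw [Matrix.map_apply, Matrix.charmatrix_apply_ne _ _ _ hik]
    simp [Matrix.one_apply_ne hik]

lemma det_smul_one_sub_eq_prod (B : Matrix n n ℝ) (hB : B.IsHermitian) (x : ℝ) :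
    (x • (1 : Matrix n n ℝ) - B).det = ∏ w : n, (x - hB.eigenvalues w) := by
  set U : Matrix n n ℝ := (Matrix.IsHermitian.eigenvectorUnitary hB : Matrix n n ℝ) with hU
  have hUU : U * star U = 1 :=
    (Matrix.mem_unitaryGroup_iff).mp (Matrix.IsHermitian.eigenvectorUnitary hB).2
  have hUU' : star U * U = 1 :=
    (Matrix.mem_unitaryGroup_iff').mp (Matrix.IsHermitian.eigenvectorUnitary hB).2
  have key : x • (1 : Matrix n n ℝ) - B
      = U * (x • (1 : Matrix n n ℝ) - Matrix.diagonal (RCLike.ofReal ∘ hB.eigenvalues)) * star U := by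
    rw [Matrix.mul_sub, Matrix.sub_mul]
    congr 1
    · rw [Matrix.mul_smul, Matrix.smul_mul, Matrix.mul_one, hUU]
    · exact hB.spectral_theorem
  rw [key, Matrix.det_mul, Matrix.det_mul]
  have hdet1 : U.det * (star U).det = 1 := by
    rw [← Matrix.det_mul, hUU, Matrix.det_one]
  have hdiag : x • (1 : Matrix n n ℝ) - Matrix.diagonal (RCLike.ofReal ∘ hB.eigenvalues)
      = Matrix.diagonal (fun w => x - hB.eigenvalues w) := by
    ext i k
    by_cases hik : i = k
    · subst hik; simp [Matrix.one_apply_eq, Matrix.diagonal]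
    · simp [Matrix.one_apply_ne hik, Matrix.diagonal, hik]
  calc U.det * (x • (1 : Matrix n n ℝ)
          - Matrix.diagonal (RCLike.ofReal ∘ hB.eigenvalues)).det * (star U).det
      = (x • (1 : Matrix n n ℝ) - Matrix.diagonal (RCLike.ofReal ∘ hB.eigenvalues)).det
          * (U.det * (star U).det) := by ring
    _ = (Matrix.diagonal (fun w => x - hB.eigenvalues w)).det := by rw [hdet1, hdiag, mul_one]
    _ = ∏ w : n, (x - hB.eigenvalues w) := Matrix.det_diagonal

lemma charpoly_eq_prod_eigenvalues (B : Matrix n n ℝ) (hB : B.IsHermitian) :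
    B.charpoly = ∏ w : n, (X - C (hB.eigenvalues w)) := by
  apply Polynomial.funext
  intro x
  rw [eval_charpoly', det_smul_one_sub_eq_prod B hB, Polynomial.eval_prod]
  exact Finset.prod_congr rfl (fun w _ => by simp)

lemma roots_prod_X_sub_C' {ι : Type*} [Fintype ι] (f : ι → ℝ) :
    (∏ i : ι, (X - C (f i))).roots = Multiset.map f Finset.univ.val := by
  have h : ∏ i : ι, (X - C (f i))
      = ((Multiset.map f Finset.univ.val).map (fun a => X - C a)).prod := by
    rw [Multiset.map_map]
    rfl
  rw [h, Polynomial.roots_multiset_prod_X_sub_C]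

end Charpoly

lemma count_transfer {ι κ : Type*} [Fintype ι] [Fintype κ] (f : ι → ℝ) (g : κ → ℝ)
    (h : Multiset.map f Finset.univ.val = Multiset.map g Finset.univ.val)
    (p : ℝ → Prop) [DecidablePred p] :
    (Finset.univ.filter (fun i => p (f i))).card
      = (Finset.univ.filter (fun k => p (g k))).card := by
  have h1 := congrArg (Multiset.countP p) h
  rw [Multiset.countP_map, Multiset.countP_map] at h1
  have e1 : (Finset.univ.filter (fun i => p (f i))).card
      = Multiset.card (Multiset.filter (fun a => p (f a)) Finset.univ.val) := rfl
  have e2 : (Finset.univ.filter (fun k => p (g k))).card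
      = Multiset.card (Multiset.filter (fun a => p (g a)) Finset.univ.val) := rfl
  rw [e1, e2, h1]

lemma antitone_median {n : ℕ} (lam : Fin n → ℝ) (hmono : Antitone lam) (c : ℝ) (t : ℕ)
    (i : Fin n) (hit : (i : ℕ) + 1 = t)
    (hgt : ((Finset.univ : Finset (Fin n)).filter (fun k => c < lam k)).card < t)
    (hlt : ((Finset.univ : Finset (Fin n)).filter (fun k => lam k < c)).card ≤ n - t) :
    lam i = c := by
  have hin := i.isLt
  rcases lt_trichotomy (lam i) c with h1 | h1 | h1
  · exfalso
    have hsub : Finset.Ici i ⊆ Finset.univ.filter (fun k => lam k < c) := by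
      intro k hk
      rw [Finset.mem_filter]
      exact ⟨Finset.mem_univ k, lt_of_le_of_lt (hmono (Finset.mem_Ici.mp hk)) h1⟩
    have hcard := Finset.card_le_card hsub
    rw [Fin.card_Ici] at hcard
    omega
  · exact h1
  · exfalso
    have hsub : Finset.Iic i ⊆ Finset.univ.filter (fun k => c < lam k) := by
      intro k hk
      rw [Finset.mem_filter]
      exact ⟨Finset.mem_univ k, lt_of_lt_of_le h1 (hmono (Finset.mem_Iic.mp hk))⟩
    have hcard := Finset.card_le_card hsub
    rw [Fin.card_Iic] at hcard
    omega

section Rank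
variable [NeZero m] [NeZero q]

lemma eig_const (hm : 2 ≤ m) (μ : ℝ) (v : Vx m q → ℝ)
    (hv : (G m q).adjMatrix ℝ *ᵥ v = μ • v) (hν : μ ^ 2 - 1 ≠ 0) (a : Bool) (i : ZMod m)
    (j j' : ZMod q) : v (a, i, j) = v (a, i, j') :=
  mul_left_cancel₀ hν ((second_order hm μ v hv a i j).trans
    (second_order hm μ v hv a i j').symm)

lemma card_big_le (hm : 2 ≤ m) (hA : ((G m q).adjMatrix ℝ).IsHermitian) :
    (Finset.univ.filter
        (fun w : Vx m q => hA.eigenvalues w < -1 ∨ 1 < hA.eigenvalues w)).card ≤ 2 * m := by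
  classical
  set S := Finset.univ.filter
    (fun w : Vx m q => hA.eigenvalues w < -1 ∨ 1 < hA.eigenvalues w) with hS
  let e := WithLp.linearEquiv 2 ℝ ((Vx m q) → ℝ)
  have hli : LinearIndependent ℝ (fun w : Vx m q => hA.eigenvectorBasis w) :=
    hA.eigenvectorBasis.orthonormal.linearIndependent
  have hliS : LinearIndependent ℝ
      (fun w : {w // w ∈ S} => e (hA.eigenvectorBasis w.1)) :=
    (hli.comp Subtype.val Subtype.val_injective).map' e.toLinearMap e.ker
  let Φ : ((Bool × ZMod m) → ℝ) →ₗ[ℝ] ((Vx m q) → ℝ) :=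
    { toFun := fun f w => f (w.1, w.2.1),
      map_add' := fun f g => rfl,
      map_smul' := fun c f => rfl }
  have hmem : ∀ w : Vx m q, w ∈ S → e (hA.eigenvectorBasis w) ∈ LinearMap.range Φ := by
    intro w hw
    rw [hS, Finset.mem_filter] at hw
    have hν : hA.eigenvalues w ^ 2 - 1 ≠ 0 := by
      rcases hw.2 with h | h <;> nlinarith
    have heig : (G m q).adjMatrix ℝ *ᵥ (e (hA.eigenvectorBasis w))
        = hA.eigenvalues w • (e (hA.eigenvectorBasis w)) := hA.mulVec_eigenvectorBasis w
    refine ⟨fun p => (e (hA.eigenvectorBasis w)) (p.1, p.2, 0), ?_⟩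
    funext u
    obtain ⟨a, i, j⟩ := u
    exact eig_const hm _ _ heig hν a i 0 j
  let F : {w // w ∈ S} → LinearMap.range Φ :=
    fun w => ⟨e (hA.eigenvectorBasis w.1), hmem w.1 w.2⟩
  have hliF : LinearIndependent ℝ F :=
    LinearIndependent.of_comp (LinearMap.range Φ).subtype hliS
  have hcard1 : Fintype.card {w // w ∈ S} ≤ Module.finrank ℝ (LinearMap.range Φ) :=
    hliF.fintype_card_le_finrank
  have hcard2 : Module.finrank ℝ (LinearMap.range Φ) ≤ 2 * m := by
    refine le_trans (LinearMap.finrank_range_le Φ) ?_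
    rw [Module.finrank_fintype_fun_eq_card]
    simp [ZMod.card, two_mul]
  calc S.card = Fintype.card {w // w ∈ S} := (Fintype.card_coe S).symm
    _ ≤ 2 * m := le_trans hcard1 hcard2

end Rank

section Symm
variable [NeZero m] [NeZero q]

lemma adj_ne_side {u v : Vx m q} (h : (G m q).Adj u v) : u.1 ≠ v.1 := by
  rcases h with ⟨h1, h2, _⟩ | ⟨h1, h2, _⟩ <;> rw [h1, h2] <;> simp

lemma det_symm (x : ℝ) :
    (x • (1 : Matrix (Vx m q) (Vx m q) ℝ) + (G m q).adjMatrix ℝ).det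
      = (x • (1 : Matrix (Vx m q) (Vx m q) ℝ) - (G m q).adjMatrix ℝ).det := by
  set A := (G m q).adjMatrix ℝ with hA
  set D : Matrix (Vx m q) (Vx m q) ℝ := Matrix.diagonal (fun w => cond w.1 1 (-1)) with hD
  have hDD : D * D = 1 := by
    rw [hD, Matrix.diagonal_mul_diagonal]
    have h : (fun w : Vx m q => cond w.1 (1 : ℝ) (-1) * cond w.1 (1 : ℝ) (-1))
        = fun _ => (1 : ℝ) := by
      funext w
      cases hw : w.1 <;> simp
    rw [h, Matrix.diagonal_one]
  have hDAD : D * A * D = -A := by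
    ext u v
    rw [Matrix.mul_diagonal, Matrix.diagonal_mul]
    by_cases hside : u.1 = v.1
    · have hzero : A u v = 0 := by
        rw [hA, SimpleGraph.adjMatrix_apply, if_neg (fun hadj => adj_ne_side hadj hside)]
      simp [Matrix.neg_apply, hzero]
    · have hd : cond u.1 (1 : ℝ) (-1) * cond v.1 (1 : ℝ) (-1) = -1 := by
        cases hu : u.1 <;> cases hv : v.1 <;> simp_all
      rw [Matrix.neg_apply]
      calc cond u.1 (1 : ℝ) (-1) * A u v * cond v.1 (1 : ℝ) (-1)
          = (cond u.1 (1 : ℝ) (-1) * cond v.1 (1 : ℝ) (-1)) * A u v := by ring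
        _ = -A u v := by rw [hd]; ring
  have h1 : D * (x • (1 : Matrix (Vx m q) (Vx m q) ℝ)) * D = x • 1 := by
    rw [Matrix.mul_smul, Matrix.mul_one, Matrix.smul_mul, hDD]
  have key : x • (1 : Matrix (Vx m q) (Vx m q) ℝ) + A = D * (x • 1 - A) * D := by
    calc x • (1 : Matrix (Vx m q) (Vx m q) ℝ) + A
        = D * (x • (1 : Matrix (Vx m q) (Vx m q) ℝ)) * D - D * A * D := by
          rw [h1, hDAD, sub_neg_eq_add]
      _ = D * (x • 1 - A) * D := by rw [Matrix.mul_sub, Matrix.sub_mul]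
  rw [key, Matrix.det_mul, Matrix.det_mul]
  have hdet : D.det * D.det = 1 := by rw [← Matrix.det_mul, hDD, Matrix.det_one]
  calc D.det * (x • (1 : Matrix (Vx m q) (Vx m q) ℝ) - A).det * D.det
      = (x • (1 : Matrix (Vx m q) (Vx m q) ℝ) - A).det * (D.det * D.det) := by ring
    _ = (x • (1 : Matrix (Vx m q) (Vx m q) ℝ) - A).det := by rw [hdet, mul_one]

lemma lam_multiset_symm {k : ℕ} (lam : Fin k → ℝ)
    (hchar : ((G m q).adjMatrix ℝ).charpoly = ∏ i, (X - C (lam i))) :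
    Multiset.map (fun i => -lam i) Finset.univ.val = Multiset.map lam Finset.univ.val := by
  set A := (G m q).adjMatrix ℝ with hA
  have hk : k = Fintype.card (Vx m q) := by
    have h1 := congrArg Polynomial.natDegree hchar
    rw [Matrix.charpoly_natDegree_eq_dim,
      Polynomial.natDegree_prod _ _ (fun i _ => Polynomial.X_sub_C_ne_zero _)] at h1
    simp only [Polynomial.natDegree_X_sub_C, Finset.sum_const, Finset.card_univ,
      Fintype.card_fin, smul_eq_mul, mul_one] at h1
    exact h1.symm
  have hdetx : ∀ x : ℝ, (x • (1 : Matrix (Vx m q) (Vx m q) ℝ) - A).det = ∏ i, (x - lam i) := by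
    intro x
    rw [← eval_charpoly', hchar, Polynomial.eval_prod]
    exact Finset.prod_congr rfl (fun i _ => by simp)
  have heq : ∀ x : ℝ, ∏ i, (x + lam i) = ∏ i, (x - lam i) := by
    intro x
    have h2 : x • (1 : Matrix (Vx m q) (Vx m q) ℝ) + A
        = -((-x) • (1 : Matrix (Vx m q) (Vx m q) ℝ) - A) := by
      rw [neg_sub, neg_smul, sub_neg_eq_add, add_comm]
    calc ∏ i, (x + lam i) = (-1 : ℝ) ^ k * ∏ i, (-x - lam i) := by
          rw [show ((-1 : ℝ) ^ k) = ∏ _i : Fin k, (-1 : ℝ) by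
            rw [Finset.prod_const, Finset.card_univ, Fintype.card_fin],
            ← Finset.prod_mul_distrib]
          exact Finset.prod_congr rfl (fun i _ => by ring)
      _ = (-1 : ℝ) ^ k * ((-x) • (1 : Matrix (Vx m q) (Vx m q) ℝ) - A).det := by
          rw [hdetx (-x)]
      _ = (-(((-x) • (1 : Matrix (Vx m q) (Vx m q) ℝ) - A))).det := by
          rw [Matrix.det_neg, hk]
      _ = (x • (1 : Matrix (Vx m q) (Vx m q) ℝ) + A).det := by rw [← h2]
      _ = (x • (1 : Matrix (Vx m q) (Vx m q) ℝ) - A).det := det_symm x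
      _ = ∏ i, (x - lam i) := hdetx x
  have hpoly : (∏ i : Fin k, (X - C (-lam i))) = ∏ i : Fin k, (X - C (lam i)) := by
    apply Polynomial.funext
    intro x
    rw [Polynomial.eval_prod, Polynomial.eval_prod]
    calc ∏ i : Fin k, (X - C (-lam i)).eval x = ∏ i, (x + lam i) :=
          Finset.prod_congr rfl (fun i _ => by simp)
      _ = ∏ i, (x - lam i) := heq x
      _ = ∏ i : Fin k, (X - C (lam i)).eval x :=
          Finset.prod_congr rfl (fun i _ => by simp)
  have h1 := congrArg Polynomial.roots hpoly
  rw [roots_prod_X_sub_C', roots_prod_X_sub_C'] at h1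
  exact h1

end Symm

end MedianAux

open MedianAux in
/-- For every `r ≥ 3` there are infinitely many connected `r`-regular bipartite graphs
whose eigenvalues all lie in `{−1, 1} ∪ [r−2, r] ∪ [−r, −(r−2)]`, which have both `1`
and `−1` as eigenvalues, and whose median eigenvalues (the `⌊(N+1)/2⌋`-th and
`⌈(N+1)/2⌉`-th eigenvalues in nonincreasing order, `N` the order) are `1` and `−1`. -/
theorem exists_large_regular_bipartite_median_pm_one (r : ℕ) (hr : 3 ≤ r) (N : ℕ) :
    ∃ (V : Type) (_ : Fintype V) (_ : DecidableEq V) (G : SimpleGraph V)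
      (_ : DecidableRel G.Adj),
      G.Connected ∧ G.Colorable 2 ∧ G.IsRegularOfDegree r ∧ N < Fintype.card V ∧
      (∀ μ ∈ spectrum ℝ (G.adjMatrix ℝ),
          μ = -1 ∨ μ = 1 ∨ ((r : ℝ) - 2 ≤ μ ∧ μ ≤ (r : ℝ)) ∨
            (-(r : ℝ) ≤ μ ∧ μ ≤ -((r : ℝ) - 2))) ∧
      (1 : ℝ) ∈ spectrum ℝ (G.adjMatrix ℝ) ∧
      (-1 : ℝ) ∈ spectrum ℝ (G.adjMatrix ℝ) ∧
      ∀ lam : Fin (Fintype.card V) → ℝ, Antitone lam →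
        (G.adjMatrix ℝ).charpoly = ∏ i, (X - C (lam i)) →
        ∀ i : Fin (Fintype.card V),
          ((i : ℕ) + 1 = (Fintype.card V + 1) / 2 → lam i = 1) ∧
          ((i : ℕ) + 1 = (Fintype.card V + 2) / 2 → lam i = -1) := by
  classical
  set q := r - 1 with hqdef
  have hq2 : 2 ≤ q := by omega
  have hrq : r = q + 1 := by omega
  set m := N + 3 with hmdef
  have hm2 : 2 ≤ m := by omega
  haveI : NeZero m := ⟨by omega⟩
  haveI : NeZero q := ⟨by omega⟩
  have hcardV : Fintype.card (Vx m q) = 2 * (m * q) := by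
    rw [show Fintype.card (Vx m q) = Fintype.card Bool * (Fintype.card (ZMod m)
      * Fintype.card (ZMod q)) by simp [Vx, Fintype.card_prod]]
    rw [ZMod.card, ZMod.card, Fintype.card_bool]
  have hmmq : m * 2 ≤ m * q := Nat.mul_le_mul_left m hq2
  have hqcast : (q : ℝ) = (r : ℝ) - 1 := by
    rw [hrq]
    push_cast
    ring
  refine ⟨Vx m q, inferInstance, inferInstance, G m q, inferInstance,
    connected, colorable, ?_, ?_, ?_, ?_, ?_, ?_⟩
  · rw [hrq]
    exact regular hm2
  · rw [hcardV]
    omega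
  · intro μ hμ
    obtain ⟨v, hv0, hveq⟩ := (spectrum_iff_eigen _ μ).mp hμ
    have h := eig_mem hm2 hq2 μ v hv0 hveq
    rw [hqcast] at h
    rcases h with h | h | ⟨h1, h2⟩ | ⟨h1, h2⟩
    · exact Or.inl h
    · exact Or.inr (Or.inl h)
    · exact Or.inr (Or.inr (Or.inl ⟨by linarith, by linarith⟩))
    · exact Or.inr (Or.inr (Or.inr ⟨by linarith, by linarith⟩))
  · obtain ⟨heq, hne⟩ := pm_eigen (m := m) (q := q) hm2 hq2 1 (by norm_num)
    exact (spectrum_iff_eigen _ 1).mpr ⟨_, hne, heq⟩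
  · obtain ⟨heq, hne⟩ := pm_eigen (m := m) (q := q) hm2 hq2 (-1) (by norm_num)
    exact (spectrum_iff_eigen _ (-1)).mpr ⟨_, hne, heq⟩
  · intro lam hanti hchar
    set A := (G m q).adjMatrix ℝ with hAdef
    have hA : A.IsHermitian := by
      show Aᴴ = A
      rw [Matrix.conjTranspose_eq_transpose_of_trivial]
      exact SimpleGraph.isSymm_adjMatrix _
    set ev := hA.eigenvalues with hev
    have hev_char : A.charpoly = ∏ w : Vx m q, (X - C (ev w)) :=
      charpoly_eq_prod_eigenvalues A hA
    have hmult : Multiset.map lam Finset.univ.val = Multiset.map ev Finset.univ.val := by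
      have h := congrArg Polynomial.roots (hchar.symm.trans hev_char)
      rwa [roots_prod_X_sub_C', roots_prod_X_sub_C'] at h
    have hcount : ∀ p : ℝ → Prop, ∀ _ : DecidablePred p,
        (Finset.univ.filter (fun i => p (lam i))).card
          = (Finset.univ.filter (fun w => p (ev w))).card :=
      fun p _ => count_transfer lam ev hmult p
    have hsymmM := lam_multiset_symm lam hchar
    have hsymc : ∀ p : ℝ → Prop, ∀ _ : DecidablePred p,
        (Finset.univ.filter (fun i => p (-lam i))).card
          = (Finset.univ.filter (fun i => p (lam i))).card :=
      fun p _ => count_transfer (fun i => -lam i) lam hsymmM p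
    -- eigenvalue classification
    have hallow : ∀ w : Vx m q, ev w < -1 ∨ ev w = -1 ∨ ev w = 1 ∨ 1 < ev w := by
      intro w
      have hne : (WithLp.linearEquiv 2 ℝ ((Vx m q) → ℝ)) (hA.eigenvectorBasis w) ≠ 0 := by
        rw [LinearEquiv.map_ne_zero_iff]
        exact hA.eigenvectorBasis.orthonormal.ne_zero w
      have heig : A *ᵥ (WithLp.linearEquiv 2 ℝ ((Vx m q) → ℝ)) (hA.eigenvectorBasis w)
          = ev w • (WithLp.linearEquiv 2 ℝ ((Vx m q) → ℝ)) (hA.eigenvectorBasis w) :=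
        hA.mulVec_eigenvectorBasis w
      have h := eig_mem hm2 hq2 (ev w) _ hne heig
      have hq1 : (1 : ℝ) ≤ (q : ℝ) - 1 := by
        have : (2 : ℝ) ≤ (q : ℝ) := by exact_mod_cast hq2
        linarith
      rcases h with h | h | ⟨h1, _⟩ | ⟨_, h2⟩
      · exact Or.inr (Or.inl h)
      · exact Or.inr (Or.inr (Or.inl h))
      · rcases lt_or_eq_of_le (le_trans hq1 h1) with h' | h'
        · exact Or.inr (Or.inr (Or.inr h'))
        · exact Or.inr (Or.inr (Or.inl h'.symm))
      · rcases lt_or_eq_of_le (le_trans h2 (by linarith : -((q:ℝ) - 1) ≤ -1)) with h' | h'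
        · exact Or.inl h'
        · exact Or.inr (Or.inl h')
    set c1 := (Finset.univ.filter (fun w : Vx m q => 1 < ev w)).card with hc1
    set c2 := (Finset.univ.filter (fun w : Vx m q => ev w = 1)).card with hc2
    set c3 := (Finset.univ.filter (fun w : Vx m q => ev w = -1)).card with hc3
    set c4 := (Finset.univ.filter (fun w : Vx m q => ev w < -1)).card with hc4
    have hdisj14 : Disjoint (Finset.univ.filter (fun w : Vx m q => ev w < -1))
        (Finset.univ.filter (fun w : Vx m q => 1 < ev w)) := by
      rw [Finset.disjoint_left]
      intro a ha hb
      rw [Finset.mem_filter] at ha hb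
      linarith [ha.2, hb.2]
    have hbig : c4 + c1 ≤ 2 * m := by
      have h := card_big_le hm2 hA
      rwa [Finset.filter_or, Finset.card_union_of_disjoint hdisj14] at h
    have hc14 : c1 = c4 := by
      have h := hsymc (fun x => 1 < x) inferInstance
      have heq2 : (Finset.univ.filter (fun i => 1 < -lam i))
          = Finset.univ.filter (fun i => lam i < -1) := by
        apply Finset.filter_congr
        intro x _
        constructor
        · intro hx; linarith
        · intro hx; linarith
      rw [heq2] at h
      rw [hc1, hc4, ← hcount (fun x => 1 < x) inferInstance,
        ← hcount (fun x => x < -1) inferInstance, ← h]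
    have hc23 : c2 = c3 := by
      have h := hsymc (fun x => x = 1) inferInstance
      have heq2 : (Finset.univ.filter (fun i => -lam i = 1))
          = Finset.univ.filter (fun i => lam i = -1) := by
        apply Finset.filter_congr
        intro x _
        constructor
        · intro hx; linarith
        · intro hx; rw [hx]; ring
      rw [heq2] at h
      rw [hc2, hc3, ← hcount (fun x => x = 1) inferInstance,
        ← hcount (fun x => x = -1) inferInstance, ← h]
    -- partition
    have hpart : c1 + c2 + (c3 + c4) = Fintype.card (Vx m q) := by
      have hsplit := Finset.card_filter_add_card_filter_not
        (s := (Finset.univ : Finset (Vx m q))) (p := fun w => 1 ≤ ev w)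
      have h12 : (Finset.univ.filter (fun w : Vx m q => 1 ≤ ev w)).card = c1 + c2 := by
        have he : (Finset.univ.filter (fun w : Vx m q => 1 ≤ ev w))
            = (Finset.univ.filter (fun w : Vx m q => 1 < ev w))
              ∪ (Finset.univ.filter (fun w : Vx m q => ev w = 1)) := by
          rw [← Finset.filter_or]
          apply Finset.filter_congr
          intro x _
          constructor
          · intro hx
            rcases lt_or_eq_of_le hx with h' | h'
            · exact Or.inl h'
            · exact Or.inr h'.symm
          · intro hx
            rcases hx with h' | h'
            · exact le_of_lt h'
            · rw [h']
        rw [he, Finset.card_union_of_disjoint]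
        rw [Finset.disjoint_left]
        intro a ha hb
        rw [Finset.mem_filter] at ha hb
        rw [hb.2] at ha
        exact lt_irrefl _ ha.2
      have h34 : (Finset.univ.filter (fun w : Vx m q => ¬ 1 ≤ ev w)).card = c3 + c4 := by
        have he : (Finset.univ.filter (fun w : Vx m q => ¬ 1 ≤ ev w))
            = (Finset.univ.filter (fun w : Vx m q => ev w = -1))
              ∪ (Finset.univ.filter (fun w : Vx m q => ev w < -1)) := by
          rw [← Finset.filter_or]
          apply Finset.filter_congr
          intro x _
          constructor
          · intro hx
            rcases hallow x with h' | h' | h' | h'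
            · exact Or.inr h'
            · exact Or.inl h'
            · exact absurd (le_of_eq h'.symm) hx
            · exact absurd (le_of_lt h') hx
          · intro hx
            rcases hx with h' | h' <;> intro hcon
            · rw [h'] at hcon; linarith
            · linarith
        rw [he, Finset.card_union_of_disjoint]
        rw [Finset.disjoint_left]
        intro a ha hb
        rw [Finset.mem_filter] at ha hb
        rw [ha.2] at hb
        linarith [hb.2]
      rw [h12, h34] at hsplit
      rwa [Finset.card_univ] at hsplit
    have hc1m : c1 ≤ m := by omega
    have hc12 : c1 + c2 = m * q := by
      rw [hcardV] at hpart
      omega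
    -- median computations
    intro i
    have hcV : Fintype.card (Vx m q) = 2 * (m * q) := hcardV
    constructor
    · intro hidx
      have hidx' : (i : ℕ) + 1 = m * q := by omega
      apply antitone_median lam hanti 1 (m * q) i hidx'
      · rw [hcount (fun x => 1 < x) inferInstance]
        calc (Finset.univ.filter (fun w : Vx m q => 1 < ev w)).card = c1 := rfl
          _ < m * q := by omega
      · rw [hcount (fun x => x < 1) inferInstance]
        have he : (Finset.univ.filter (fun w : Vx m q => ev w < 1))
            = (Finset.univ.filter (fun w : Vx m q => ev w = -1))
              ∪ (Finset.univ.filter (fun w : Vx m q => ev w < -1)) := by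
          rw [← Finset.filter_or]
          apply Finset.filter_congr
          intro x _
          constructor
          · intro hx
            rcases hallow x with h' | h' | h' | h'
            · exact Or.inr h'
            · exact Or.inl h'
            · rw [h'] at hx; linarith
            · linarith
          · intro hx
            rcases hx with h' | h'
            · rw [h']; linarith
            · linarith
        rw [he, Finset.card_union_of_disjoint]
        · show c3 + c4 ≤ Fintype.card (Vx m q) - m * q
          rw [hcV]
          omega
        · rw [Finset.disjoint_left]
          intro a ha hb
          rw [Finset.mem_filter] at ha hb
          rw [ha.2] at hb
          linarith [hb.2]
    · intro hidx
      have hidx' : (i : ℕ) + 1 = m * q + 1 := by omega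
      apply antitone_median lam hanti (-1) (m * q + 1) i hidx'
      · rw [hcount (fun x => -1 < x) inferInstance]
        have he : (Finset.univ.filter (fun w : Vx m q => -1 < ev w))
            = (Finset.univ.filter (fun w : Vx m q => 1 < ev w))
              ∪ (Finset.univ.filter (fun w : Vx m q => ev w = 1)) := by
          rw [← Finset.filter_or]
          apply Finset.filter_congr
          intro x _
          constructor
          · intro hx
            rcases hallow x with h' | h' | h' | h'
            · linarith
            · rw [h'] at hx; linarith
            · exact Or.inr h'
            · exact Or.inl h'
          · intro hx
            rcases hx with h' | h'
            · linarith
            · rw [h']; linarith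
        rw [he, Finset.card_union_of_disjoint]
        · show c1 + c2 < m * q + 1
          omega
        · rw [Finset.disjoint_left]
          intro a ha hb
          rw [Finset.mem_filter] at ha hb
          rw [hb.2] at ha
          exact lt_irrefl _ ha.2
      · rw [hcount (fun x => x < -1) inferInstance]
        show c4 ≤ Fintype.card (Vx m q) - (m * q + 1)
        rw [hcV]
        omega
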